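/- For the Hata random map with probabilities (1/2,1/2), the measure μ is invariant for the random map: for every Borel set B ⊆ [0,1], (1/2)·μ(τ₁⁻¹(B)) + (1/2)·μ(τ₂⁻¹(B)) = μ(B). -/

import Mathlib

open MeasureTheory Set
open scoped ENNReal

noncomputable section

/-- First Hata map: `τ₁(x) = x/2` on `(0,1/2)`, `τ₁(x) = 2x-1` on `(1/2,1)`. -/
def tau1 : ℝ → ℝ := fun x => if x < 1/2 then x/2 else 2*x - 1

/-- Second Hata map: `τ₂(x) = 2x` on `(0,1/2)`, `τ₂(x) = (x+1)/2` on `(1/2,1)`. -/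
def tau2 : ℝ → ℝ := fun x => if x < 1/2 then 2*x else (x+1)/2

/-- The interval `I_k^- = (2^{-(k+2)}, 2^{-(k+1)})`. -/
def Im (k : ℕ) : Set ℝ := Set.Ioo ((1:ℝ)/2^(k+2)) ((1:ℝ)/2^(k+1))

/-- The interval `I_k^+ = (1-2^{-(k+1)}, 1-2^{-(k+2)})`. -/
def Ip (k : ℕ) : Set ℝ := Set.Ioo (1 - (1:ℝ)/2^(k+1)) (1 - (1:ℝ)/2^(k+2))

/-- The density `h` of the invariant measure: `h = 2^{k+1}-1` on `I_k^- ∪ I_k^+`. -/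
def hataDensity : ℝ → ℝ≥0∞ :=
  fun x => ∑' k : ℕ, ((2:ℝ≥0∞)^(k+1) - 1) * Set.indicator (Im k ∪ Ip k) (fun _ => (1:ℝ≥0∞)) x

/-- The invariant measure `μ` of the Hata map, `μ(dx) = h(x) dx`. -/
def muH : Measure ℝ := volume.withDensity hataDensity

/-! ### Auxiliary lemmas -/

lemma one_div_pow_pos' (n : ℕ) : (0:ℝ) < 1/2^n := by positivity

lemma one_div_pow_le' {m n : ℕ} (h : m ≤ n) : (1:ℝ)/2^n ≤ 1/2^m :=
  one_div_le_one_div_of_le (by positivity) (pow_le_pow_right₀ one_le_two h)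

lemma one_div_pow_half' (n : ℕ) : (1:ℝ)/2^(n+1) = (1/2^n)/2 := by
  rw [pow_succ]; ring

lemma Im_mem_unique {j k : ℕ} {x : ℝ} (hj : x ∈ Im j) (hk : x ∈ Im k) : j = k := by
  by_contra hne
  rcases Nat.lt_or_ge j k with h | h
  · have : (1:ℝ)/2^(k+1) ≤ 1/2^(j+2) := one_div_pow_le' (by omega)
    obtain ⟨a1, a2⟩ := hj; obtain ⟨b1, b2⟩ := hk
    linarith
  · have hlt : k < j := by omega
    have : (1:ℝ)/2^(j+1) ≤ 1/2^(k+2) := one_div_pow_le' (by omega)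
    obtain ⟨a1, a2⟩ := hj; obtain ⟨b1, b2⟩ := hk
    linarith

lemma Ip_mem_unique {j k : ℕ} {x : ℝ} (hj : x ∈ Ip j) (hk : x ∈ Ip k) : j = k := by
  by_contra hne
  rcases Nat.lt_or_ge j k with h | h
  · have : (1:ℝ)/2^(k+1) ≤ 1/2^(j+2) := one_div_pow_le' (by omega)
    obtain ⟨a1, a2⟩ := hj; obtain ⟨b1, b2⟩ := hk
    linarith
  · have hlt : k < j := by omega
    have : (1:ℝ)/2^(j+1) ≤ 1/2^(k+2) := one_div_pow_le' (by omega)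
    obtain ⟨a1, a2⟩ := hj; obtain ⟨b1, b2⟩ := hk
    linarith

lemma Im_subset_Iio (k : ℕ) : Im k ⊆ Iio (1/2 : ℝ) := by
  intro x hx
  have h : (1:ℝ)/2^(k+1) ≤ 1/2 := by
    have := one_div_pow_le' (show 1 ≤ k+1 by omega)
    simpa using this
  exact lt_of_lt_of_le hx.2 h

lemma Ip_subset_Ioi (k : ℕ) : Ip k ⊆ Ioi (1/2 : ℝ) := by
  intro x hx
  have h : (1:ℝ)/2^(k+1) ≤ 1/2 := by
    have := one_div_pow_le' (show 1 ≤ k+1 by omega)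
    simpa using this
  have := hx.1
  simp only [mem_Ioi]
  linarith

lemma mem_unique {j k : ℕ} {x : ℝ} (hj : x ∈ Im j ∪ Ip j) (hk : x ∈ Im k ∪ Ip k) : j = k := by
  rcases hj with hj | hj <;> rcases hk with hk | hk
  · exact Im_mem_unique hj hk
  · exfalso
    have h1 := Im_subset_Iio j hj
    have h2 := Ip_subset_Ioi k hk
    simp only [mem_Iio, mem_Ioi] at h1 h2
    linarith
  · exfalso
    have h1 := Im_subset_Iio k hk
    have h2 := Ip_subset_Ioi j hj
    simp only [mem_Iio, mem_Ioi] at h1 h2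
    linarith
  · exact Ip_mem_unique hj hk

lemma measurableSet_ImIp (k : ℕ) : MeasurableSet (Im k ∪ Ip k) :=
  measurableSet_Ioo.union measurableSet_Ioo

lemma measurable_hataDensity : Measurable hataDensity := by
  apply Measurable.ennreal_tsum
  intro k
  exact (measurable_const.indicator (measurableSet_ImIp k)).const_mul _

lemma hataDensity_apply {k : ℕ} {x : ℝ} (hx : x ∈ Im k ∪ Ip k) :
    hataDensity x = (2:ℝ≥0∞)^(k+1) - 1 := by
  unfold hataDensity
  rw [tsum_eq_single k]
  · rw [indicator_of_mem hx, mul_one]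
  · intro j hj
    rw [indicator_of_notMem, mul_zero]
    intro hxj
    exact hj (mem_unique hxj hx)

lemma two_pow_sub_one' (m : ℕ) : (2:ℝ≥0∞)^m - 1 = ((2^m - 1 : ℕ) : ℝ≥0∞) := by
  simp [Nat.cast_sub (Nat.one_le_two_pow (n := m))]

/-- The key arithmetic identity. -/
lemma arith (k : ℕ) :
    ((2:ℝ≥0∞)^k - 1) + 4⁻¹ * 1 + 4⁻¹ * ((2:ℝ≥0∞)^(k+2) - 1) = (2:ℝ≥0∞)^(k+1) - 1 := by
  have h4 : (4:ℝ≥0∞) ≠ 0 := by norm_num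
  have ht : (4:ℝ≥0∞) ≠ ⊤ := by norm_num
  rw [← ENNReal.mul_right_inj h4 ht]
  rw [two_pow_sub_one', two_pow_sub_one', two_pow_sub_one']
  rw [mul_add, mul_add, ← mul_assoc, ← mul_assoc, ENNReal.mul_inv_cancel h4 ht]
  simp only [one_mul, mul_one]
  have h : 1 ≤ 2^k := Nat.one_le_two_pow
  have e1 : 2^(k+1) = 2*2^k := by ring
  have e2 : 2^(k+2) = 4*2^k := by ring
  norm_cast
  omega

/-! ### The transfer operator pieces -/

def g1 : ℝ → ℝ≥0∞ := fun y => hataDensity (2*y)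
def g2 : ℝ → ℝ≥0∞ := fun y => hataDensity ((y+1)/2)
def g3 : ℝ → ℝ≥0∞ := fun y => hataDensity (y/2)
def g4 : ℝ → ℝ≥0∞ := fun y => hataDensity (2*y - 1)

lemma measurable_affine (a b : ℝ) : Measurable (fun x : ℝ => a * x + b) :=
  (measurable_id.const_mul a).add_const b

lemma measurable_g1 : Measurable g1 := measurable_hataDensity.comp (measurable_id.const_mul 2)
lemma measurable_g2 : Measurable g2 :=
  measurable_hataDensity.comp ((measurable_id.add_const 1).div_const 2)
lemma measurable_g3 : Measurable g3 := measurable_hataDensity.comp (measurable_id.div_const 2)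
lemma measurable_g4 : Measurable g4 :=
  measurable_hataDensity.comp ((measurable_id.const_mul 2).sub_const 1)

lemma map_affine (a b : ℝ) (ha : a ≠ 0) :
    Measure.map (fun x : ℝ => a * x + b) volume = ENNReal.ofReal |a⁻¹| • volume := by
  have : (fun x : ℝ => a * x + b) = (fun y : ℝ => y + b) ∘ (fun x : ℝ => a * x) := rfl
  rw [this, ← Measure.map_map (measurable_add_const b) (measurable_const_mul a),
    Real.map_volume_mul_left ha, Measure.map_smul, map_add_right_eq_self volume b]

lemma muH_affine (a b : ℝ) (ha : a ≠ 0) (S : Set ℝ) (hS : MeasurableSet S)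
    (g : ℝ → ℝ≥0∞) (hg : Measurable g) (hgh : ∀ x, g (a * x + b) = hataDensity x) :
    muH ((fun x => a * x + b) ⁻¹' S) = ENNReal.ofReal |a⁻¹| * ∫⁻ y in S, g y := by
  have hf : Measurable (fun x : ℝ => a * x + b) := measurable_affine a b
  have hmeas : MeasurableSet ((fun x : ℝ => a * x + b) ⁻¹' S) := hf hS
  rw [muH, withDensity_apply _ hmeas, ← lintegral_indicator hmeas]
  have heq : ∀ x, ((fun x : ℝ => a * x + b) ⁻¹' S).indicator hataDensity x
      = S.indicator g ((fun x : ℝ => a * x + b) x) := by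
    intro x
    by_cases hx : x ∈ (fun x : ℝ => a * x + b) ⁻¹' S
    · rw [Set.indicator_of_mem hx hataDensity,
        Set.indicator_of_mem (show (fun x : ℝ => a * x + b) x ∈ S from hx) g, hgh]
    · rw [Set.indicator_of_notMem hx hataDensity,
        Set.indicator_of_notMem (show (fun x : ℝ => a * x + b) x ∉ S from hx) g]
  rw [lintegral_congr heq, ← lintegral_map (hg.indicator hS) hf, map_affine a b ha,
    lintegral_smul_measure, smul_eq_mul, lintegral_indicator hS]

/-! ### Pointwise identity for the transfer operator -/

def Ffun : ℝ → ℝ≥0∞ := fun y =>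
  (Iio (1/4:ℝ)).indicator g1 y + 4⁻¹ * g2 y
    + (4⁻¹ * ((Iio (1:ℝ)).indicator g3 y) + (Ici (3/4:ℝ)).indicator g4 y)

lemma Ffun_eq_on_Im (k : ℕ) (y : ℝ) (hy : y ∈ Im k) : Ffun y = hataDensity y := by
  obtain ⟨hy1, hy2⟩ := hy
  have hy2' : y < 1/2 := Im_subset_Iio k ⟨hy1, hy2⟩
  have hy0 : 0 < y := lt_trans (one_div_pow_pos' (k+2)) hy1
  have hg2v : g2 y = 1 := by
    have hmem : (y+1)/2 ∈ Im 0 ∪ Ip 0 := by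
      right
      constructor
      · norm_num; linarith
      · norm_num; linarith
    show hataDensity ((y+1)/2) = 1
    rw [hataDensity_apply hmem, two_pow_sub_one']
    norm_num
  have hg3v : g3 y = (2:ℝ≥0∞)^(k+2) - 1 := by
    have hmem : y/2 ∈ Im (k+1) ∪ Ip (k+1) := by
      left
      constructor
      · show (1:ℝ)/2^(k+1+2) < y/2
        rw [show k+1+2 = (k+2)+1 by omega, one_div_pow_half' (k+2)]
        linarith
      · show y/2 < (1:ℝ)/2^(k+1+1)
        rw [one_div_pow_half' (k+1)]
        linarith
    show hataDensity (y/2) = _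
    rw [hataDensity_apply hmem]
  have hind3 : (Iio (1:ℝ)).indicator g3 y = g3 y :=
    indicator_of_mem (by simp only [mem_Iio]; linarith) _
  have hind4 : (Ici (3/4:ℝ)).indicator g4 y = 0 :=
    indicator_of_notMem (by simp only [mem_Ici, not_le]; linarith) _
  have hind1 : (Iio (1/4:ℝ)).indicator g1 y = (2:ℝ≥0∞)^k - 1 := by
    cases k with
    | zero =>
      rw [indicator_of_notMem]
      · rw [pow_zero]
        simp
      · simp only [mem_Iio, not_lt]
        norm_num at hy1
        linarith
    | succ j =>
      have hquarter : (1:ℝ)/2^(j+1+1) ≤ 1/4 := by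
        have := one_div_pow_le' (show 2 ≤ j+1+1 by omega)
        norm_num at this ⊢
        linarith
    -- y < 1/4
      rw [indicator_of_mem (by simp only [mem_Iio]; linarith)]
      have hmem : 2*y ∈ Im j ∪ Ip j := by
        left
        rw [show j+1+2 = (j+2)+1 by omega, one_div_pow_half' (j+2)] at hy1
        rw [one_div_pow_half' (j+1)] at hy2
        constructor
        · show (1:ℝ)/2^(j+2) < 2*y
          linarith
        · show 2*y < (1:ℝ)/2^(j+1)
          linarith
      show hataDensity (2*y) = _
      rw [hataDensity_apply hmem]
  rw [Ffun, hataDensity_apply (Or.inl ⟨hy1, hy2⟩), hind1, hind3, hind4, hg2v, hg3v, add_zero]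
  exact arith k

lemma Ffun_eq_on_Ip (k : ℕ) (y : ℝ) (hy : y ∈ Ip k) : Ffun y = hataDensity y := by
  obtain ⟨hy1, hy2⟩ := hy
  have hy1' : 1/2 < y := Ip_subset_Ioi k ⟨hy1, hy2⟩
  have hylt1 : y < 1 := lt_of_lt_of_le hy2 (by have := one_div_pow_pos' (k+2); linarith)
  have hg2v : g2 y = (2:ℝ≥0∞)^(k+2) - 1 := by
    have hmem : (y+1)/2 ∈ Im (k+1) ∪ Ip (k+1) := by
      right
      constructor
      · show 1 - (1:ℝ)/2^(k+1+1) < (y+1)/2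
        rw [one_div_pow_half' (k+1)]
        linarith
      · show (y+1)/2 < 1 - (1:ℝ)/2^(k+1+2)
        rw [show k+1+2 = (k+2)+1 by omega, one_div_pow_half' (k+2)]
        linarith
    show hataDensity ((y+1)/2) = _
    rw [hataDensity_apply hmem]
  have hg3v : g3 y = 1 := by
    have hmem : y/2 ∈ Im 0 ∪ Ip 0 := by
      left
      constructor
      · norm_num; linarith
      · norm_num; linarith
    show hataDensity (y/2) = 1
    rw [hataDensity_apply hmem, two_pow_sub_one']
    norm_num
  have hind1 : (Iio (1/4:ℝ)).indicator g1 y = 0 :=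
    indicator_of_notMem (by simp only [mem_Iio, not_lt]; linarith) _
  have hind3 : (Iio (1:ℝ)).indicator g3 y = g3 y :=
    indicator_of_mem (by simp only [mem_Iio]; linarith) _
  have hind4 : (Ici (3/4:ℝ)).indicator g4 y = (2:ℝ≥0∞)^k - 1 := by
    cases k with
    | zero =>
      rw [indicator_of_notMem]
      · rw [pow_zero]
        simp
      · simp only [mem_Ici, not_le]
        norm_num at hy2
        linarith
    | succ j =>
      have hquarter : (1:ℝ)/2^(j+1+1) ≤ 1/4 := by
        have := one_div_pow_le' (show 2 ≤ j+1+1 by omega)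
        norm_num at this ⊢
        linarith
      rw [indicator_of_mem (by simp only [mem_Ici]; linarith)]
      have hmem : 2*y - 1 ∈ Im j ∪ Ip j := by
        right
        rw [one_div_pow_half' (j+1)] at hy1
        rw [show j+1+2 = (j+2)+1 by omega, one_div_pow_half' (j+2)] at hy2
        constructor
        · show 1 - (1:ℝ)/2^(j+1) < 2*y - 1
          linarith
        · show 2*y - 1 < 1 - (1:ℝ)/2^(j+2)
          linarith
      show hataDensity (2*y - 1) = _
      rw [hataDensity_apply hmem]
  rw [Ffun, hataDensity_apply (Or.inr ⟨hy1, hy2⟩), hind1, hind3, hind4, hg2v, hg3v, zero_add]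
  calc 4⁻¹ * ((2:ℝ≥0∞)^(k+2) - 1) + (4⁻¹ * 1 + ((2:ℝ≥0∞)^k - 1))
      = ((2:ℝ≥0∞)^k - 1) + 4⁻¹ * 1 + 4⁻¹ * ((2:ℝ≥0∞)^(k+2) - 1) := by
        generalize ((2:ℝ≥0∞)^(k+2) - 1) = A
        generalize ((2:ℝ≥0∞)^k - 1) = B
        ring
    _ = (2:ℝ≥0∞)^(k+1) - 1 := arith k

/-! ### The exceptional null set -/

lemma ImIp_subset_Icc (k : ℕ) : Im k ∪ Ip k ⊆ Icc (0:ℝ) 1 := by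
  rintro x (hx | hx)
  · have h1 := one_div_pow_pos' (k+2)
    have h2 : (1:ℝ)/2^(k+1) ≤ 1/2 := by
      have := one_div_pow_le' (show 1 ≤ k+1 by omega); simpa using this
    exact ⟨le_of_lt (lt_trans h1 hx.1), by have := hx.2; linarith⟩
  · have h1 := one_div_pow_pos' (k+2)
    have h2 : (1:ℝ)/2^(k+1) ≤ 1/2 := by
      have := one_div_pow_le' (show 1 ≤ k+1 by omega); simpa using this
    exact ⟨by have := hx.1; linarith, by have := hx.2; linarith⟩

lemma volume_ImIp (k : ℕ) : volume (Im k ∪ Ip k) = 2 * (2⁻¹:ℝ≥0∞)^(k+2) := by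
  have hdisj : Disjoint (Im k) (Ip k) := by
    rw [disjoint_left]
    intro x hx1 hx2
    have h1 := Im_subset_Iio k hx1
    have h2 := Ip_subset_Ioi k hx2
    simp only [mem_Iio, mem_Ioi] at h1 h2
    linarith
  rw [measure_union hdisj measurableSet_Ioo]
  have hle : (1:ℝ)/2^(k+2) ≤ 1/2^(k+1) := one_div_pow_le' (by omega)
  have e : (1:ℝ)/2^(k+1) - 1/2^(k+2) = 1/2^(k+2) := by
    rw [one_div_pow_half' (k+1)]; ring
  have e2 : (1:ℝ) - 1/2^(k+2) - (1 - 1/2^(k+1)) = 1/2^(k+2) := by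
    rw [one_div_pow_half' (k+1)]; ring
  rw [Im, Ip, Real.volume_Ioo, Real.volume_Ioo, e, e2]
  have : ENNReal.ofReal ((1:ℝ)/2^(k+2)) = (2⁻¹:ℝ≥0∞)^(k+2) := by
    rw [show (1:ℝ)/2^(k+2) = (1/2)^(k+2) by rw [div_pow]; norm_num,
      ENNReal.ofReal_pow (by norm_num)]
    congr 1
    rw [one_div, ENNReal.ofReal_inv_of_pos (by norm_num)]
    norm_num
  rw [this, two_mul]

lemma volume_union_ImIp : volume (⋃ k, (Im k ∪ Ip k)) = 1 := by
  have hdisj : Pairwise (Function.onFun Disjoint (fun k => Im k ∪ Ip k)) := by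
    intro j k hjk
    rw [Function.onFun, disjoint_left]
    intro x hxj hxk
    exact hjk (mem_unique hxj hxk)
  rw [measure_iUnion hdisj measurableSet_ImIp]
  have : ∀ k : ℕ, volume (Im k ∪ Ip k) = 2 * (2⁻¹:ℝ≥0∞)^(k+2) := volume_ImIp
  rw [tsum_congr this]
  have : ∑' k : ℕ, 2 * (2⁻¹:ℝ≥0∞)^(k+2) = 2 * ((2⁻¹:ℝ≥0∞)^2 * ∑' k : ℕ, (2⁻¹:ℝ≥0∞)^k) := by
    rw [← ENNReal.tsum_mul_left, ← ENNReal.tsum_mul_left]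
    congr 1
    funext k
    rw [pow_add]
    ring
  rw [this, ENNReal.tsum_geometric, ENNReal.one_sub_inv_two, inv_inv]
  rw [show ((2:ℝ≥0∞)⁻¹)^2 = 4⁻¹ by
    rw [sq, ← ENNReal.mul_inv (by norm_num) (by norm_num)]; norm_num]
  rw [show (4:ℝ≥0∞)⁻¹ * 2 = 2⁻¹ by
    rw [show (4:ℝ≥0∞) = 2*2 by norm_num, ENNReal.mul_inv (by norm_num) (by norm_num),
      mul_assoc, ENNReal.inv_mul_cancel (by norm_num) (by norm_num), mul_one]]
  exact ENNReal.mul_inv_cancel (by norm_num) (by norm_num)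

lemma volume_exceptional : volume (Icc (0:ℝ) 1 \ ⋃ k, (Im k ∪ Ip k)) = 0 := by
  have hU : MeasurableSet (⋃ k, (Im k ∪ Ip k)) := MeasurableSet.iUnion measurableSet_ImIp
  have hsub : (⋃ k, (Im k ∪ Ip k)) ⊆ Icc (0:ℝ) 1 := iUnion_subset ImIp_subset_Icc
  rw [measure_diff hsub hU.nullMeasurableSet (by rw [volume_union_ImIp]; exact ENNReal.one_ne_top),
    volume_union_ImIp, Real.volume_Icc]
  norm_num

/-! ### Main theorem -/

theorem hata_invariant (B : Set ℝ) (hB : MeasurableSet B) (hB1 : B ⊆ Set.Icc 0 1) :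
    (1/2 : ℝ≥0∞) * muH (tau1 ⁻¹' B) + (1/2 : ℝ≥0∞) * muH (tau2 ⁻¹' B) = muH B := by
  -- decompositions of the preimages
  have hpre1 : tau1 ⁻¹' B = (fun x : ℝ => (1/2) * x + 0) ⁻¹' (B ∩ Iio (1/4))
      ∪ (fun x : ℝ => 2 * x + (-1)) ⁻¹' B := by
    ext x
    simp only [tau1, mem_preimage, mem_union, mem_inter_iff, mem_Iio]
    have e1 : (1/2:ℝ) * x + 0 = x/2 := by ring
    have e2 : (2:ℝ) * x + (-1) = 2*x - 1 := by ring
    rw [e1, e2]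
    by_cases h : x < 1/2
    · rw [if_pos h]
      constructor
      · intro hx; left; exact ⟨hx, by linarith⟩
      · rintro (⟨hx, _⟩ | hx)
        · exact hx
        · have := (hB1 hx).1; linarith
    · rw [if_neg h]
      constructor
      · intro hx; right; exact hx
      · rintro (⟨hx, hx4⟩ | hx)
        · push_neg at h; linarith
        · exact hx
  have hpre2 : tau2 ⁻¹' B = (fun x : ℝ => 2 * x + 0) ⁻¹' (B ∩ Iio 1)
      ∪ (fun x : ℝ => (1/2) * x + 1/2) ⁻¹' (B ∩ Ici (3/4)) := by
    ext x
    simp only [tau2, mem_preimage, mem_union, mem_inter_iff, mem_Iio, mem_Ici]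
    have e1 : (2:ℝ) * x + 0 = 2*x := by ring
    have e2 : (1/2:ℝ) * x + 1/2 = (x+1)/2 := by ring
    rw [e1, e2]
    by_cases h : x < 1/2
    · rw [if_pos h]
      constructor
      · intro hx; left; exact ⟨hx, by linarith⟩
      · rintro (⟨hx, _⟩ | ⟨hx, hx4⟩)
        · exact hx
        · linarith
    · rw [if_neg h]
      push_neg at h
      constructor
      · intro hx; right; exact ⟨hx, by linarith⟩
      · rintro (⟨hx, hx1⟩ | ⟨hx, _⟩)
        · linarith
        · exact hx
  -- disjointness of the pieces
  have hd1 : Disjoint ((fun x : ℝ => (1/2) * x + 0) ⁻¹' (B ∩ Iio (1/4)))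
      ((fun x : ℝ => 2 * x + (-1)) ⁻¹' B) := by
    rw [disjoint_left]
    intro x hx1 hx2
    simp only [mem_preimage, mem_inter_iff, mem_Iio] at hx1 hx2
    have h1 := hx1.2
    have h2 := (hB1 hx2).1
    linarith
  have hd2 : Disjoint ((fun x : ℝ => 2 * x + 0) ⁻¹' (B ∩ Iio 1))
      ((fun x : ℝ => (1/2) * x + 1/2) ⁻¹' (B ∩ Ici (3/4))) := by
    rw [disjoint_left]
    intro x hx1 hx2
    simp only [mem_preimage, mem_inter_iff, mem_Iio, mem_Ici] at hx1 hx2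
    have h1 := hx1.2
    have h2 := hx2.2
    linarith
  -- the four preimage measures
  have hBI4 : MeasurableSet (B ∩ Iio (1/4:ℝ)) := hB.inter measurableSet_Iio
  have hBI1 : MeasurableSet (B ∩ Iio (1:ℝ)) := hB.inter measurableSet_Iio
  have hBI34 : MeasurableSet (B ∩ Ici (3/4:ℝ)) := hB.inter measurableSet_Ici
  have hm1 : muH ((fun x : ℝ => (1/2) * x + 0) ⁻¹' (B ∩ Iio (1/4)))
      = 2 * ∫⁻ y in B ∩ Iio (1/4), g1 y := by
    rw [muH_affine (1/2) 0 (by norm_num) _ hBI4 g1 measurable_g1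
      (fun x => congrArg hataDensity (by ring))]
    congr 1
    norm_num [ENNReal.ofReal_ofNat]
  have hm2 : muH ((fun x : ℝ => 2 * x + (-1)) ⁻¹' B)
      = 2⁻¹ * ∫⁻ y in B, g2 y := by
    rw [muH_affine 2 (-1) (by norm_num) _ hB g2 measurable_g2
      (fun x => congrArg hataDensity (by ring))]
    congr 1
    rw [abs_of_pos (by norm_num), ENNReal.ofReal_inv_of_pos (by norm_num)]
    norm_num
  have hm3 : muH ((fun x : ℝ => 2 * x + 0) ⁻¹' (B ∩ Iio 1))
      = 2⁻¹ * ∫⁻ y in B ∩ Iio 1, g3 y := by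
    rw [muH_affine 2 0 (by norm_num) _ hBI1 g3 measurable_g3
      (fun x => congrArg hataDensity (by ring))]
    congr 1
    rw [abs_of_pos (by norm_num), ENNReal.ofReal_inv_of_pos (by norm_num)]
    norm_num
  have hm4 : muH ((fun x : ℝ => (1/2) * x + 1/2) ⁻¹' (B ∩ Ici (3/4)))
      = 2 * ∫⁻ y in B ∩ Ici (3/4), g4 y := by
    rw [muH_affine (1/2) (1/2) (by norm_num) _ hBI34 g4 measurable_g4
      (fun x => congrArg hataDensity (by ring))]
    congr 1
    norm_num [ENNReal.ofReal_ofNat]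
  -- measurability of pieces for measure_union
  have hmeasp2 : MeasurableSet ((fun x : ℝ => 2 * x + (-1)) ⁻¹' B) :=
    measurable_affine 2 (-1) hB
  have hmeasp4 : MeasurableSet ((fun x : ℝ => (1/2) * x + 1/2) ⁻¹' (B ∩ Ici (3/4))) :=
    measurable_affine (1/2) (1/2) hBI34
  rw [hpre1, hpre2, measure_union hd1 hmeasp2, measure_union hd2 hmeasp4,
    hm1, hm2, hm3, hm4]
  -- rewrite restricted integrals as indicator integrals over B
  have hconv : ∀ (S : Set ℝ), MeasurableSet S → ∀ g : ℝ → ℝ≥0∞,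
      ∫⁻ y in B ∩ S, g y = ∫⁻ y in B, S.indicator g y := by
    intro S hS g
    rw [inter_comm, ← Measure.restrict_restrict hS, lintegral_indicator hS]
  rw [hconv _ measurableSet_Iio g1, hconv _ measurableSet_Iio g3, hconv _ measurableSet_Ici g4]
  -- combine the constants
  have hcomb : ∀ A1 A2 A3 A4 : ℝ≥0∞,
      (1/2) * (2 * A1 + 2⁻¹ * A2) + (1/2) * (2⁻¹ * A3 + 2 * A4)
        = A1 + 4⁻¹ * A2 + (4⁻¹ * A3 + A4) := by
    intro A1 A2 A3 A4
    have e1 : (1/2:ℝ≥0∞) * 2 = 1 := by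
      rw [one_div]; exact ENNReal.inv_mul_cancel (by norm_num) (by norm_num)
    have e2 : (1/2:ℝ≥0∞) * 2⁻¹ = 4⁻¹ := by
      rw [one_div, ← ENNReal.mul_inv (by norm_num) (by norm_num)]; norm_num
    rw [mul_add, mul_add, ← mul_assoc, ← mul_assoc, ← mul_assoc, ← mul_assoc, e1, e2]
    simp only [one_mul]
  rw [hcomb]
  -- identify the sum with the integral of `Ffun`
  have m1 : Measurable fun y => (Iio (1/4:ℝ)).indicator g1 y :=
    measurable_g1.indicator measurableSet_Iio
  have m2 : Measurable fun y => 4⁻¹ * g2 y := measurable_g2.const_mul _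
  have m3 : Measurable fun y => 4⁻¹ * (Iio (1:ℝ)).indicator g3 y :=
    (measurable_g3.indicator measurableSet_Iio).const_mul _
  have hsum : (∫⁻ y in B, (Iio (1/4:ℝ)).indicator g1 y) + 4⁻¹ * (∫⁻ y in B, g2 y)
      + (4⁻¹ * (∫⁻ y in B, (Iio (1:ℝ)).indicator g3 y)
        + ∫⁻ y in B, (Ici (3/4:ℝ)).indicator g4 y) = ∫⁻ y in B, Ffun y := by
    rw [show (fun y => Ffun y) = fun y =>
      ((Iio (1/4:ℝ)).indicator g1 y + 4⁻¹ * g2 y)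
        + (4⁻¹ * ((Iio (1:ℝ)).indicator g3 y) + (Ici (3/4:ℝ)).indicator g4 y) from rfl]
    rw [lintegral_add_left (f := fun y => (Iio (1/4:ℝ)).indicator g1 y + 4⁻¹ * g2 y) (m1.add m2), lintegral_add_left m1, lintegral_add_left m3,
      lintegral_const_mul _ measurable_g2,
      lintegral_const_mul _ (measurable_g3.indicator measurableSet_Iio)]
  rw [hsum]
  -- `Ffun` agrees with the density almost everywhere on `B`
  have hae : ∀ᵐ y ∂volume.restrict B, y ∈ ⋃ k, (Im k ∪ Ip k) := by
    rw [ae_restrict_iff' hB]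
    have h0 : ∀ᵐ y ∂(volume : Measure ℝ), y ∉ Icc (0:ℝ) 1 \ ⋃ k, (Im k ∪ Ip k) :=
      measure_eq_zero_iff_ae_notMem.mp volume_exceptional
    filter_upwards [h0] with y hy hyB
    by_contra hyU
    exact hy ⟨hB1 hyB, hyU⟩
  have hcong : ∫⁻ y in B, Ffun y = ∫⁻ y in B, hataDensity y := by
    apply lintegral_congr_ae
    filter_upwards [hae] with y hy
    obtain ⟨k, hk⟩ := mem_iUnion.mp hy
    rcases hk with hk | hk
    · exact Ffun_eq_on_Im k y hk
    · exact Ffun_eq_on_Ip k y hk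
  rw [hcong, muH, withDensity_apply _ hB]

end
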